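/- Let f : ℝ^d → ℝ be twice continuously differentiable on the closed ball D of radius r centered at c ∈ ℝ^d, and suppose all second partial derivatives satisfy |∂²f/∂ϑ_i∂ϑ_j(ϑ)| ≤ M for ϑ ∈ D. Then |∫_D f(ϑ) dϑ − f(c)·vol(D)| ≤ (M d²/2) · (d/(d+2)) · vol(D) · r². -/

import Mathlib

open MeasureTheory Real


lemma lin_integral_zero {d : ℕ} (c : EuclideanSpace ℝ (Fin d)) (r : ℝ)
    (L : EuclideanSpace ℝ (Fin d) →L[ℝ] ℝ) :
    ∫ ϑ in Metric.ball c r, L (ϑ - c) = 0 := by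
  set h : EuclideanSpace ℝ (Fin d) → ℝ :=
    Set.indicator (Metric.ball (0 : EuclideanSpace ℝ (Fin d)) r) L with hh
  have h1 : ∫ ϑ in Metric.ball c r, L (ϑ - c) = ∫ x, h (x - c) := by
    rw [← MeasureTheory.integral_indicator measurableSet_ball]
    congr 1
    ext x
    by_cases hx : x ∈ Metric.ball c r
    · have hx' : x - c ∈ Metric.ball (0 : EuclideanSpace ℝ (Fin d)) r := by
        simpa [Metric.mem_ball, dist_eq_norm] using hx
      simp [hh, Set.indicator_of_mem, hx, hx']
    · have hx' : x - c ∉ Metric.ball (0 : EuclideanSpace ℝ (Fin d)) r := by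
        simpa [Metric.mem_ball, dist_eq_norm] using hx
      simp [hh, Set.indicator_of_notMem, hx, hx']
  have h2 : ∫ x, h (x - c) = ∫ x, h x := integral_sub_right_eq_self h c
  have h3 : ∫ x, h x = ∫ x, h (-x) := (integral_neg_eq_self h volume).symm
  have h4 : ∀ x : EuclideanSpace ℝ (Fin d), h (-x) = - h x := by
    intro x
    by_cases hx : x ∈ Metric.ball (0 : EuclideanSpace ℝ (Fin d)) r
    · have hx' : -x ∈ Metric.ball (0 : EuclideanSpace ℝ (Fin d)) r := by
        simpa [Metric.mem_ball, dist_eq_norm] using hx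
      simp [hh, Set.indicator_of_mem, hx, hx']
    · have hx' : -x ∉ Metric.ball (0 : EuclideanSpace ℝ (Fin d)) r := by
        simpa [Metric.mem_ball, dist_eq_norm] using hx
      simp [hh, Set.indicator_of_notMem, hx, hx']
  have h5 : ∫ x, h x = - ∫ x, h x := by
    nth_rewrite 1 [h3]
    simp_rw [h4]
    exact integral_neg h
  rw [h1, h2]
  linarith [h5]

lemma moment_two {d : ℕ} (hd : 0 < d) (c : EuclideanSpace ℝ (Fin d)) {r : ℝ} (hr : 0 < r) :
    ∫ ϑ in Metric.ball c r, ‖ϑ - c‖ ^ 2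
      = ((d : ℝ) / ((d : ℝ) + 2)) * (volume (Metric.ball c r)).toReal * r ^ 2 := by
  haveI : Nonempty (Fin d) := Fin.pos_iff_nonempty.mp hd
  -- step 1: translate to centered ball
  have htrans : ∫ ϑ in Metric.ball c r, ‖ϑ - c‖ ^ 2
      = ∫ x in Metric.ball (0 : EuclideanSpace ℝ (Fin d)) r, ‖x‖ ^ 2 := by
    rw [← MeasureTheory.integral_indicator measurableSet_ball,
        ← MeasureTheory.integral_indicator measurableSet_ball]
    rw [← integral_sub_right_eq_self
      (Set.indicator (Metric.ball (0 : EuclideanSpace ℝ (Fin d)) r) (fun x => ‖x‖ ^ 2)) c]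
    congr 1
    ext x
    by_cases hx : x ∈ Metric.ball c r
    · have hx' : x - c ∈ Metric.ball (0 : EuclideanSpace ℝ (Fin d)) r := by
        simpa [Metric.mem_ball, dist_eq_norm] using hx
      simp [Set.indicator_of_mem, hx, hx']
    · have hx' : x - c ∉ Metric.ball (0 : EuclideanSpace ℝ (Fin d)) r := by
        simpa [Metric.mem_ball, dist_eq_norm] using hx
      simp [Set.indicator_of_notMem, hx, hx']
  -- step 2: polar coordinates
  have hfin : Module.finrank ℝ (EuclideanSpace ℝ (Fin d)) = d := by
    simp [finrank_euclideanSpace]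
  have hpolar := MeasureTheory.integral_fun_norm_addHaar
    (volume : Measure (EuclideanSpace ℝ (Fin d)))
    (fun y => Set.indicator (Set.Iio r) (fun y => y ^ 2) y)
  rw [hfin] at hpolar
  have hLHS : (∫ x : EuclideanSpace ℝ (Fin d),
      Set.indicator (Set.Iio r) (fun y => y ^ 2) ‖x‖)
      = ∫ x in Metric.ball (0 : EuclideanSpace ℝ (Fin d)) r, ‖x‖ ^ 2 := by
    rw [← MeasureTheory.integral_indicator measurableSet_ball]
    congr 1
    ext x
    by_cases hx : x ∈ Metric.ball (0 : EuclideanSpace ℝ (Fin d)) r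
    · have hx' : ‖x‖ ∈ Set.Iio r := by simpa [Metric.mem_ball, dist_eq_norm] using hx
      simp [Set.indicator_of_mem, hx, hx']
    · have hx' : ‖x‖ ∉ Set.Iio r := by simpa [Metric.mem_ball, dist_eq_norm] using hx
      simp [Set.indicator_of_notMem, hx, hx']
  -- step 3: the 1-d integral
  have h1d : (∫ y in Set.Ioi (0:ℝ), y ^ (d - 1) • Set.indicator (Set.Iio r) (fun y => y ^ 2) y)
      = r ^ (d + 2) / (d + 2) := by
    have heq : ∀ y : ℝ, y ^ (d - 1) • Set.indicator (Set.Iio r) (fun y => y ^ 2) y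
        = Set.indicator (Set.Iio r) (fun y => y ^ (d - 1) * y ^ 2) y := by
      intro y
      by_cases hy : y ∈ Set.Iio r <;>
        simp [Set.indicator_of_mem, Set.indicator_of_notMem, hy, smul_eq_mul]
    simp_rw [heq]
    rw [MeasureTheory.setIntegral_indicator measurableSet_Iio]
    have hset : Set.Ioi (0:ℝ) ∩ Set.Iio r = Set.Ioo 0 r := Set.Ioi_inter_Iio
    rw [hset]
    have hpow : ∀ y : ℝ, y ^ (d - 1) * y ^ 2 = y ^ (d + 1) := by
      intro y
      rw [← pow_add]
      congr 1
      omega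
    simp_rw [hpow]
    rw [← MeasureTheory.integral_Ioc_eq_integral_Ioo, ← intervalIntegral.integral_of_le hr.le]
    rw [integral_pow]
    rw [zero_pow (by omega : d + 1 + 1 ≠ 0)]
    push_cast
    ring
  rw [htrans, ← hLHS, hpolar, h1d]
  -- step 4: volumes
  have hball : volume (Metric.ball c r)
      = ENNReal.ofReal (r ^ d) * volume (Metric.ball (0 : EuclideanSpace ℝ (Fin d)) 1) := by
    rw [Measure.addHaar_ball volume c hr.le, hfin]
  have hfin1 : (volume (Metric.ball (0 : EuclideanSpace ℝ (Fin d)) 1)).toReal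
      * r ^ d = (volume (Metric.ball c r)).toReal := by
    rw [hball, ENNReal.toReal_mul, ENNReal.toReal_ofReal (by positivity)]
    ring
  rw [nsmul_eq_mul, smul_eq_mul]
  rw [measureReal_def]
  rw [← hfin1]
  have hrpow : r ^ (d + 2) = r ^ d * r ^ 2 := by rw [pow_add]
  rw [hrpow]
  have hd2 : ((d : ℝ) + 2) ≠ 0 := by positivity
  field_simp

lemma decomp_single {d : ℕ} (u : EuclideanSpace ℝ (Fin d)) :
    u = ∑ i, u i • EuclideanSpace.single i (1:ℝ) := by
  have := (EuclideanSpace.basisFun (Fin d) ℝ).toBasis.sum_repr u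
  simp only [EuclideanSpace.basisFun_repr, OrthonormalBasis.coe_toBasis,
    EuclideanSpace.basisFun_apply] at this
  exact this.symm

lemma sum_abs_le_sqrt {d : ℕ} (u : EuclideanSpace ℝ (Fin d)) :
    ∑ i, |u i| ≤ Real.sqrt d * ‖u‖ := by
  have h1 : (∑ i, |u i|) ^ 2 ≤ (d : ℝ) * ∑ i, |u i| ^ 2 := by
    simpa using sq_sum_le_card_mul_sum_sq (s := Finset.univ) (f := fun i : Fin d => |u i|)
  have h2 : ‖u‖ ^ 2 = ∑ i, |u i| ^ 2 := by
    rw [EuclideanSpace.norm_eq]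
    rw [Real.sq_sqrt (by positivity)]
    simp [Real.norm_eq_abs]
  have h3 : (Real.sqrt d * ‖u‖) ^ 2 = (d : ℝ) * ‖u‖ ^ 2 := by
    rw [mul_pow, Real.sq_sqrt (by positivity)]
  have hs : 0 ≤ ∑ i, |u i| := Finset.sum_nonneg fun i _ => abs_nonneg _
  have hb : 0 ≤ Real.sqrt d * ‖u‖ := by positivity
  have h4 : (∑ i, |u i|) ^ 2 ≤ (Real.sqrt d * ‖u‖) ^ 2 := by rw [h3, h2]; exact h1
  calc ∑ i, |u i| = Real.sqrt ((∑ i, |u i|) ^ 2) := (Real.sqrt_sq hs).symm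
    _ ≤ Real.sqrt ((Real.sqrt d * ‖u‖) ^ 2) := Real.sqrt_le_sqrt h4
    _ = Real.sqrt d * ‖u‖ := Real.sqrt_sq hb

lemma bilin_bound {d : ℕ} {M : ℝ} (hM : 0 ≤ M)
    (A : EuclideanSpace ℝ (Fin d) →L[ℝ] (EuclideanSpace ℝ (Fin d) →L[ℝ] ℝ))
    (hA : ∀ i j : Fin d, |A (EuclideanSpace.single j (1:ℝ)) (EuclideanSpace.single i (1:ℝ))| ≤ M)
    (w v : EuclideanSpace ℝ (Fin d)) :
    |A w v| ≤ M * d * ‖w‖ * ‖v‖ := by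
  have hrepr : A w v = ∑ j, ∑ i, (w j * v i)
      * A (EuclideanSpace.single j (1:ℝ)) (EuclideanSpace.single i (1:ℝ)) := by
    conv_lhs => rw [decomp_single w, decomp_single v]
    simp only [map_sum, _root_.map_smul, ContinuousLinearMap.sum_apply,
      ContinuousLinearMap.smul_apply, smul_eq_mul, Finset.mul_sum]
    rw [Finset.sum_comm]
    apply Finset.sum_congr rfl
    intro j _
    apply Finset.sum_congr rfl
    intro i _
    ring
  have hstep : |A w v| ≤ M * (∑ j, |w j|) * (∑ i, |v i|) := by
    rw [hrepr]
    calc |∑ j, ∑ i, (w j * v i)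
        * A (EuclideanSpace.single j (1:ℝ)) (EuclideanSpace.single i (1:ℝ))|
        ≤ ∑ j, ∑ i, |w j| * |v i| * M := by
          refine (Finset.abs_sum_le_sum_abs _ _).trans ?_
          apply Finset.sum_le_sum
          intro j _
          refine (Finset.abs_sum_le_sum_abs _ _).trans ?_
          apply Finset.sum_le_sum
          intro i _
          rw [abs_mul, abs_mul]
          exact mul_le_mul_of_nonneg_left (hA i j) (by positivity)
      _ = M * (∑ j, |w j|) * (∑ i, |v i|) := by
          simp only [Finset.sum_mul, Finset.mul_sum]
          rw [Finset.sum_comm]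
          apply Finset.sum_congr rfl
          intro j _
          apply Finset.sum_congr rfl
          intro i _
          ring
  refine hstep.trans ?_
  have h1 := sum_abs_le_sqrt w
  have h2 := sum_abs_le_sqrt v
  have hw : 0 ≤ ∑ j, |w j| := Finset.sum_nonneg fun i _ => abs_nonneg _
  have hv : 0 ≤ ∑ i, |v i| := Finset.sum_nonneg fun i _ => abs_nonneg _
  have hsq : Real.sqrt d * Real.sqrt d = (d : ℝ) := Real.mul_self_sqrt (by positivity)
  calc M * (∑ j, |w j|) * (∑ i, |v i|)
      ≤ M * (Real.sqrt d * ‖w‖) * (Real.sqrt d * ‖v‖) := by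
        apply mul_le_mul
        · exact mul_le_mul_of_nonneg_left h1 hM
        · exact h2
        · exact hv
        · positivity
    _ = M * (Real.sqrt d * Real.sqrt d) * ‖w‖ * ‖v‖ := by ring
    _ = M * d * ‖w‖ * ‖v‖ := by rw [hsq]

theorem taylor_ball_estimate (d : ℕ) (hd : 0 < d)
    (c : EuclideanSpace ℝ (Fin d)) (r : ℝ) (hr : 0 < r) (M : ℝ) (hM : 0 ≤ M)
    (f : EuclideanSpace ℝ (Fin d) → ℝ)
    (hf : ContDiffOn ℝ 2 f (Metric.closedBall c r))
    (hbound : ∀ ϑ ∈ Metric.closedBall c r, ∀ i j : Fin d,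
      |fderiv ℝ (fun y => fderiv ℝ f y (EuclideanSpace.single i (1:ℝ))) ϑ
        (EuclideanSpace.single j (1:ℝ))| ≤ M) :
    |(∫ ϑ in Metric.closedBall c r, f ϑ)
        - f c * (volume (Metric.closedBall c r)).toReal|
      ≤ (M * (d : ℝ) ^ 2 / 2) * ((d : ℝ) / ((d : ℝ) + 2))
        * (volume (Metric.closedBall c r)).toReal * r ^ 2 := by
  haveI : Nonempty (Fin d) := Fin.pos_iff_nonempty.mp hd
  set F := fderiv ℝ f with hFdef
  set B := Metric.ball c r with hBdef
  set D := Metric.closedBall c r with hDdef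
  have hsub : B ⊆ D := Metric.ball_subset_closedBall
  have hcB : c ∈ B := Metric.mem_ball_self hr
  have hfB : ContDiffOn ℝ 2 f B := hf.mono hsub
  have hfx : ∀ x ∈ B, ContDiffAt ℝ 2 f x := fun x hx =>
    hfB.contDiffAt (Metric.isOpen_ball.mem_nhds hx)
  have hdf : ∀ x ∈ B, DifferentiableAt ℝ f x := fun x hx =>
    (hfx x hx).differentiableAt (by norm_num)
  have hdF : ∀ x ∈ B, DifferentiableAt ℝ F x := fun x hx =>
    ((hfx x hx).fderiv_right (m := 1) (by norm_num)).differentiableAt (by norm_num)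
  -- entrywise bound on the second derivative
  have hA_entry : ∀ x ∈ B, ∀ i j : Fin d,
      |fderiv ℝ F x (EuclideanSpace.single j (1:ℝ)) (EuclideanSpace.single i (1:ℝ))| ≤ M := by
    intro x hx i j
    have h := hbound x (hsub hx) i j
    have hcomp : HasFDerivAt (fun y => F y (EuclideanSpace.single i (1:ℝ)))
        ((ContinuousLinearMap.apply ℝ ℝ (EuclideanSpace.single i (1:ℝ))).comp (fderiv ℝ F x)) x :=
      ((ContinuousLinearMap.apply ℝ ℝ (EuclideanSpace.single i (1:ℝ))).hasFDerivAt).comp x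
        (hdF x hx).hasFDerivAt
    rw [hcomp.fderiv] at h
    simpa using h
  -- operator norm bound
  have hA_norm : ∀ x ∈ B, ‖fderiv ℝ F x‖ ≤ M * d := by
    intro x hx
    refine ContinuousLinearMap.opNorm_le_bound _ (by positivity) (fun w => ?_)
    refine ContinuousLinearMap.opNorm_le_bound _ (by positivity) (fun v => ?_)
    have hb := bilin_bound hM (fderiv ℝ F x) (fun i j => hA_entry x hx i j) w v
    rw [Real.norm_eq_abs]
    calc |fderiv ℝ F x w v| ≤ M * d * ‖w‖ * ‖v‖ := hb
      _ = M * ↑d * ‖w‖ * ‖v‖ := by ring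
  have hLip : ∀ x ∈ B, ‖F x - F c‖ ≤ M * d * ‖x - c‖ := fun x hx =>
    Convex.norm_image_sub_le_of_norm_fderiv_le hdF hA_norm (convex_ball c r) hcB hx
  -- pointwise Taylor estimate
  have hTaylor : ∀ ϑ ∈ B, |f ϑ - f c - F c (ϑ - c)| ≤ M * d / 2 * ‖ϑ - c‖ ^ 2 := by
    intro ϑ hϑ
    set v := ϑ - c with hv
    have hvnorm : ‖v‖ < r := by
      rw [hv]; simpa [hBdef, Metric.mem_ball, dist_eq_norm] using hϑ
    have hseg : ∀ t ∈ Set.Icc (0:ℝ) 1, c + t • v ∈ B := by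
      intro t ht
      simp only [hBdef, Metric.mem_ball, dist_eq_norm, add_sub_cancel_left]
      rw [norm_smul, Real.norm_eq_abs, abs_of_nonneg ht.1]
      calc t * ‖v‖ ≤ 1 * ‖v‖ := mul_le_mul_of_nonneg_right ht.2 (norm_nonneg v)
        _ < r := by rw [one_mul]; exact hvnorm
    have hderiv : ∀ t ∈ Set.uIcc (0:ℝ) 1,
        HasDerivAt (fun t => f (c + t • v)) (F (c + t • v) v) t := by
      intro t ht
      rw [Set.uIcc_of_le (by norm_num : (0:ℝ) ≤ 1)] at ht
      have hline : HasDerivAt (fun s : ℝ => c + s • v) v t := by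
        have h0 : HasDerivAt (fun s : ℝ => s • v) ((1:ℝ) • v) t := (hasDerivAt_id t).smul_const v
        simpa using h0.const_add c
      exact ((hdf _ (hseg t ht)).hasFDerivAt).comp_hasDerivAt t hline
    have hcont : ContinuousOn (fun t => F (c + t • v) v) (Set.uIcc (0:ℝ) 1) := by
      rw [Set.uIcc_of_le (by norm_num : (0:ℝ) ≤ 1)]
      intro t ht
      apply ContinuousAt.continuousWithinAt
      have h1 : ContinuousAt (fun t : ℝ => c + t • v) t :=
        (continuous_const.add (continuous_id.smul continuous_const)).continuousAt
      have h2 : ContinuousAt F (c + t • v) := (hdF _ (hseg t ht)).continuousAt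
      have h3 : ContinuousAt (fun t : ℝ => F (c + t • v)) t := ContinuousAt.comp h2 h1
      exact ContinuousAt.comp ((ContinuousLinearMap.apply ℝ ℝ v).continuous.continuousAt) h3
    have hint : IntervalIntegrable (fun t => F (c + t • v) v) volume 0 1 :=
      hcont.intervalIntegrable
    have hftc : ∫ t in (0:ℝ)..1, F (c + t • v) v = f ϑ - f c := by
      rw [intervalIntegral.integral_eq_sub_of_hasDerivAt hderiv hint]
      have h1 : c + (1:ℝ) • v = ϑ := by rw [one_smul, hv]; abel
      have h0 : c + (0:ℝ) • v = c := by rw [zero_smul, add_zero]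
      rw [h1, h0]
    have hsplit : f ϑ - f c - F c v = ∫ t in (0:ℝ)..1, (F (c + t • v) v - F c v) := by
      rw [intervalIntegral.integral_sub hint intervalIntegrable_const, hftc]
      simp
    rw [hsplit]
    have hptbound : ∀ᵐ t ∂(volume.restrict (Set.uIoc (0:ℝ) 1)),
        ‖F (c + t • v) v - F c v‖ ≤ (M * d * ‖v‖ ^ 2) * t := by
      refine (ae_restrict_iff' measurableSet_uIoc).mpr (ae_of_all _ ?_)
      intro t ht
      rw [Set.uIoc_of_le (by norm_num : (0:ℝ) ≤ 1)] at ht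
      have ht' : t ∈ Set.Icc (0:ℝ) 1 := ⟨le_of_lt ht.1, ht.2⟩
      have hFt := hLip _ (hseg t ht')
      have heq : F (c + t • v) v - F c v = (F (c + t • v) - F c) v := by
        simp [ContinuousLinearMap.sub_apply]
      rw [heq]
      calc ‖(F (c + t • v) - F c) v‖ ≤ ‖F (c + t • v) - F c‖ * ‖v‖ :=
            (F (c + t • v) - F c).le_opNorm v
        _ ≤ (M * d * ‖c + t • v - c‖) * ‖v‖ := mul_le_mul_of_nonneg_right hFt (norm_nonneg v)
        _ = (M * d * ‖v‖ ^ 2) * t := by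
            rw [add_sub_cancel_left, norm_smul, Real.norm_eq_abs, abs_of_nonneg ht'.1]
            ring
    have hgint : IntervalIntegrable (fun t : ℝ => (M * d * ‖v‖ ^ 2) * t) volume 0 1 :=
      (continuous_const.mul continuous_id).intervalIntegrable 0 1
    have hbnd := intervalIntegral.norm_integral_le_abs_of_norm_le hptbound hgint
    have hval : ∫ t in (0:ℝ)..1, (M * d * ‖v‖ ^ 2) * t = M * d * ‖v‖ ^ 2 / 2 := by
      rw [intervalIntegral.integral_const_mul, integral_id]
      ring
    rw [hval, Real.norm_eq_abs] at hbnd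
    calc |∫ t in (0:ℝ)..1, (F (c + t • v) v - F c v)| ≤ |M * d * ‖v‖ ^ 2 / 2| := hbnd
      _ = M * d / 2 * ‖v‖ ^ 2 := by rw [abs_of_nonneg (by positivity)]; ring
  -- integrability facts
  have hKomp : IsCompact D := isCompact_closedBall c r
  have hfD : IntegrableOn f D volume := hf.continuousOn.integrableOn_compact hKomp
  have hlin_cont : Continuous fun ϑ : EuclideanSpace ℝ (Fin d) => f c + (F c) (ϑ - c) :=
    continuous_const.add ((F c).continuous.comp (continuous_id.sub continuous_const))
  have hlinD : IntegrableOn (fun ϑ => f c + F c (ϑ - c)) D volume :=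
    hlin_cont.continuousOn.integrableOn_compact hKomp
  have hfB' : IntegrableOn f B volume := hfD.mono_set hsub
  have hlinB : IntegrableOn (fun ϑ => f c + F c (ϑ - c)) B volume := hlinD.mono_set hsub
  have hq_cont : Continuous fun ϑ : EuclideanSpace ℝ (Fin d) => M * d / 2 * ‖ϑ - c‖ ^ 2 := by
    apply continuous_const.mul
    exact ((continuous_id.sub continuous_const).norm.pow 2)
  have hqB : IntegrableOn (fun ϑ => M * d / 2 * ‖ϑ - c‖ ^ 2) B volume :=
    (hq_cont.continuousOn.integrableOn_compact hKomp).mono_set hsub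
  -- ae equality of ball and closed ball
  have hBDae : B =ᵐ[volume] D := by
    rw [MeasureTheory.ae_eq_set]
    constructor
    · rw [Set.diff_eq_empty.mpr hsub]; exact measure_empty
    · rw [hBdef, hDdef, Metric.closedBall_diff_ball]
      exact Measure.addHaar_sphere volume c r
  have hvolBD : volume B = volume D :=
    (Measure.addHaar_closedBall_eq_addHaar_ball volume c r).symm
  -- key identity
  have hiden : ∫ ϑ in B, (f ϑ - (f c + F c (ϑ - c)))
      = (∫ ϑ in D, f ϑ) - f c * (volume D).toReal := by
    rw [integral_sub hfB' hlinB]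
    have hconst : IntegrableOn (fun _ : EuclideanSpace ℝ (Fin d) => f c) B volume := by
      exact integrableOn_const measure_ball_lt_top.ne
    have hlin0 : IntegrableOn (fun ϑ => F c (ϑ - c)) B volume := by
      have : Continuous fun ϑ : EuclideanSpace ℝ (Fin d) => F c (ϑ - c) :=
        (F c).continuous.comp (continuous_id.sub continuous_const)
      exact (this.continuousOn.integrableOn_compact hKomp).mono_set hsub
    rw [integral_add hconst hlin0, lin_integral_zero c r (F c)]
    rw [setIntegral_congr_set hBDae, setIntegral_const, measureReal_def, hvolBD]
    rw [smul_eq_mul]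
    ring
  have hnorm : |∫ ϑ in B, (f ϑ - (f c + F c (ϑ - c)))|
      ≤ ∫ ϑ in B, M * d / 2 * ‖ϑ - c‖ ^ 2 := by
    rw [← Real.norm_eq_abs]
    apply norm_integral_le_of_norm_le hqB
    refine (ae_restrict_iff' measurableSet_ball).mpr (ae_of_all _ ?_)
    intro ϑ hϑ
    have := hTaylor ϑ hϑ
    rw [Real.norm_eq_abs]
    calc |f ϑ - (f c + F c (ϑ - c))| = |f ϑ - f c - F c (ϑ - c)| := by ring_nf
      _ ≤ M * d / 2 * ‖ϑ - c‖ ^ 2 := this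
  have hmom : ∫ ϑ in B, M * d / 2 * ‖ϑ - c‖ ^ 2
      = M * d / 2 * (((d : ℝ) / ((d : ℝ) + 2)) * (volume B).toReal * r ^ 2) := by
    rw [MeasureTheory.integral_const_mul, moment_two hd c hr]
  calc |(∫ ϑ in D, f ϑ) - f c * (volume D).toReal|
      = |∫ ϑ in B, (f ϑ - (f c + F c (ϑ - c)))| := by rw [hiden]
    _ ≤ ∫ ϑ in B, M * d / 2 * ‖ϑ - c‖ ^ 2 := hnorm
    _ = M * d / 2 * (((d : ℝ) / ((d : ℝ) + 2)) * (volume B).toReal * r ^ 2) := hmom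
    _ ≤ (M * (d : ℝ) ^ 2 / 2) * ((d : ℝ) / ((d : ℝ) + 2)) * (volume D).toReal * r ^ 2 := by
        rw [hvolBD]
        have h1 : (M * d / 2) ≤ (M * (d : ℝ) ^ 2 / 2) := by
          have hd1 : (1:ℝ) ≤ (d:ℝ) := by exact_mod_cast hd
          nlinarith [mul_nonneg hM (mul_nonneg (by linarith : (0:ℝ) ≤ (d:ℝ))
            (by linarith : (0:ℝ) ≤ (d:ℝ) - 1))]
        have h2 : (0:ℝ) ≤ (d : ℝ) / ((d : ℝ) + 2) := by positivity
        have h3 : (0:ℝ) ≤ (volume D).toReal := ENNReal.toReal_nonneg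
        have h4 : (0:ℝ) ≤ r ^ 2 := by positivity
        nlinarith [mul_nonneg (mul_nonneg h2 h3) h4]
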